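/- arXiv:1303.0627 — 4 statements merged into one kernel-verified Lean document; each statement's English description precedes it below -/
import Mathlib

section
/- Let α be a Borel probability measure on ℝ with infinite support and finite moments up to order 2n, with orthonormal polynomials p_j(x) = Σ_{i=0}^{j} π_{j,i} x^i, evaluated at complex arguments, and P_n(z) = (p_0(z), …, p_n(z))ᵀ. Then (1/2π) ∫_0^{2π} P_n(e^{it}) P_n(e^{−it})ᵀ dt = Π_n Π_nᵀ; consequently (1/2π) Σ_{j=0}^{n} ∫_0^{2π} |p_j(e^{it})|² dt = trace(M_n(α)^{-1}) = Σ_{j=0}^{n} 1/ξ_{j,n}. -/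
open MeasureTheory Matrix

/-- The `k`-th moment of the measure `α`. -/
noncomputable def mom (α : Measure ℝ) (k : ℕ) : ℝ := ∫ x, x ^ k ∂α

/-- The `(N+1) × (N+1)` Hankel moment matrix of `α`. -/
noncomputable def momMatrix (α : Measure ℝ) (N : ℕ) :
    Matrix (Fin (N + 1)) (Fin (N + 1)) ℝ :=
  Matrix.of fun i j => mom α ((i : ℕ) + (j : ℕ))

/-- The (topological) support of a measure on `ℝ`. -/
def measSupport (α : Measure ℝ) : Set ℝ := {x | ∀ U ∈ nhds x, 0 < α U}

/-- The lower triangular matrix `Π_n` of power coefficients of the polynomials `p`. -/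
noncomputable def PiMat (p : ℕ → Polynomial ℝ) (n : ℕ) :
    Matrix (Fin (n + 1)) (Fin (n + 1)) ℝ :=
  Matrix.of fun i j => (p (i : ℕ)).coeff (j : ℕ)

lemma exp_orth (a b : ℕ) :
    (∫ t in (0:ℝ)..(2*Real.pi),
      Complex.exp (Complex.I * t) ^ a * Complex.exp (-(Complex.I * t)) ^ b)
    = if a = b then (2*Real.pi : ℂ) else 0 := by
  have h1 : ∀ t : ℝ, Complex.exp (Complex.I * t) ^ a * Complex.exp (-(Complex.I * t)) ^ b
      = Complex.exp ((Complex.I * ((a:ℂ) - b)) * t) := by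
    intro t
    rw [← Complex.exp_nat_mul, ← Complex.exp_nat_mul, ← Complex.exp_add]
    ring_nf
  simp only [h1]
  by_cases hab : a = b
  · subst hab
    simp [intervalIntegral.integral_const, Complex.real_smul]
  · have hc : Complex.I * ((a:ℂ) - b) ≠ 0 := by
      refine mul_ne_zero Complex.I_ne_zero (sub_ne_zero.mpr ?_)
      exact_mod_cast hab
    rw [integral_exp_mul_complex hc]
    have h2 : Complex.exp (Complex.I * ((a:ℂ) - b) * (2*Real.pi)) = 1 := by
      have := Complex.exp_int_mul_two_pi_mul_I ((a:ℤ) - b)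
      rw [← this]
      congr 1
      push_cast
      ring
    simp [h2, hab]

lemma integral_poly_orth (n : ℕ) (q r : Polynomial ℝ)
    (hq : q.natDegree < n+1) (hr : r.natDegree < n+1) :
    (∫ t in (0:ℝ)..(2*Real.pi),
      (Polynomial.aeval (Complex.exp (Complex.I * (t:ℂ))) q) *
      (Polynomial.aeval (Complex.exp (-(Complex.I * (t:ℂ)))) r))
    = (2*Real.pi : ℂ) * ∑ i ∈ Finset.range (n+1), (q.coeff i : ℂ) * (r.coeff i) := by
  have key : ∀ t : ℝ,
      (Polynomial.aeval (Complex.exp (Complex.I * (t:ℂ))) q) *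
      (Polynomial.aeval (Complex.exp (-(Complex.I * (t:ℂ)))) r)
      = ∑ a ∈ Finset.range (n+1), ∑ b ∈ Finset.range (n+1),
          (q.coeff a : ℂ) * (r.coeff b) *
            (Complex.exp (Complex.I * t) ^ a * Complex.exp (-(Complex.I * t)) ^ b) := by
    intro t
    rw [Polynomial.aeval_eq_sum_range' hq, Polynomial.aeval_eq_sum_range' hr,
      Finset.sum_mul_sum]
    refine Finset.sum_congr rfl fun a _ => Finset.sum_congr rfl fun b _ => ?_
    simp only [Algebra.smul_def, Complex.coe_algebraMap]
    ring
  simp only [key]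
  rw [intervalIntegral.integral_finset_sum]
  · have inner : ∀ a ∈ Finset.range (n+1),
        (∫ t in (0:ℝ)..(2*Real.pi), ∑ b ∈ Finset.range (n+1),
          (q.coeff a : ℂ) * (r.coeff b) *
            (Complex.exp (Complex.I * t) ^ a * Complex.exp (-(Complex.I * t)) ^ b))
        = (2*Real.pi : ℂ) * ((q.coeff a : ℂ) * (r.coeff a)) := by
      intro a ha
      rw [intervalIntegral.integral_finset_sum]
      · have : ∀ b ∈ Finset.range (n+1),
            (∫ t in (0:ℝ)..(2*Real.pi),
              (q.coeff a : ℂ) * (r.coeff b) *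
                (Complex.exp (Complex.I * t) ^ a * Complex.exp (-(Complex.I * t)) ^ b))
            = (q.coeff a : ℂ) * (r.coeff b) * (if a = b then (2*Real.pi:ℂ) else 0) := by
          intro b _
          rw [intervalIntegral.integral_const_mul, exp_orth]
        rw [Finset.sum_congr rfl this]
        simp [Finset.mul_sum, mul_ite, Finset.sum_ite_eq, ha]
        ring
      · intro b _
        apply Continuous.intervalIntegrable
        fun_prop
    rw [Finset.sum_congr rfl inner, ← Finset.mul_sum]
  · intro a _
    apply Continuous.intervalIntegrable
    apply continuous_finset_sum
    intro b _
    fun_prop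

lemma PiMomPi (n : ℕ) (α : Measure ℝ)
    (hint : ∀ k ≤ 2 * n, Integrable (fun x : ℝ => x ^ k) α)
    (p : ℕ → Polynomial ℝ)
    (hdeg : ∀ k, (p k).natDegree = k)
    (horth : ∀ j k, ∫ x, (p j).eval x * (p k).eval x ∂α = if j = k then 1 else 0) :
    PiMat p n * momMatrix α n * (PiMat p n)ᵀ = 1 := by
  ext j k
  have hj : (p (j:ℕ)).natDegree < n + 1 := by rw [hdeg]; exact j.2
  have hk : (p (k:ℕ)).natDegree < n + 1 := by rw [hdeg]; exact k.2
  have expand : ∀ x : ℝ, (p (j:ℕ)).eval x * (p (k:ℕ)).eval x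
      = ∑ a : Fin (n+1), ∑ b : Fin (n+1),
          (p (j:ℕ)).coeff a * (p (k:ℕ)).coeff b * x ^ ((a:ℕ) + b) := by
    intro x
    rw [Polynomial.eval_eq_sum_range' hj, Polynomial.eval_eq_sum_range' hk,
      Finset.sum_mul_sum]
    rw [Finset.sum_range fun i => _]
    refine Finset.sum_congr rfl fun a _ => ?_
    rw [Finset.sum_range fun i => _]
    refine Finset.sum_congr rfl fun b _ => ?_
    rw [pow_add]; ring
  have hI : ∀ a b : Fin (n+1),
      Integrable (fun x : ℝ => (p (j:ℕ)).coeff a * (p (k:ℕ)).coeff b * x ^ ((a:ℕ)+b)) α := by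
    intro a b
    exact ((hint ((a:ℕ)+b) (by omega)).const_mul _)
  have step : (∫ x, (p (j:ℕ)).eval x * (p (k:ℕ)).eval x ∂α)
      = ∑ a : Fin (n+1), ∑ b : Fin (n+1),
          (p (j:ℕ)).coeff a * (p (k:ℕ)).coeff b * mom α ((a:ℕ)+b) := by
    simp only [expand]
    rw [integral_finset_sum _ (fun a _ => integrable_finset_sum _ (fun b _ => hI a b))]
    refine Finset.sum_congr rfl fun a _ => ?_
    rw [integral_finset_sum _ (fun b _ => hI a b)]
    refine Finset.sum_congr rfl fun b _ => ?_
    rw [mom, MeasureTheory.integral_const_mul]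
  have horthjk := horth (j:ℕ) (k:ℕ)
  rw [step] at horthjk
  have : (PiMat p n * momMatrix α n * (PiMat p n)ᵀ) j k
      = ∑ a : Fin (n+1), ∑ b : Fin (n+1),
          (p (j:ℕ)).coeff a * (p (k:ℕ)).coeff b * mom α ((a:ℕ)+b) := by
    simp only [Matrix.mul_apply, Matrix.transpose_apply, PiMat, momMatrix, Matrix.of_apply,
      Finset.sum_mul, Finset.mul_sum]
    rw [Finset.sum_comm]
    refine Finset.sum_congr rfl fun a _ => Finset.sum_congr rfl fun b _ => ?_
    ring
  rw [this, horthjk]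
  simp [Matrix.one_apply, Fin.val_eq_val]

lemma trace_inv_spectral {m : Type*} [Fintype m] [DecidableEq m]
    (M U : Matrix m m ℝ) (d : m → ℝ)
    (hUU : U * star U = 1) (hUU' : star U * U = 1)
    (hspec : M = U * Matrix.diagonal d * star U) (hd : ∀ i, d i ≠ 0) :
    M⁻¹.trace = ∑ i, (d i)⁻¹ := by
  subst hspec
  have key : Matrix.diagonal d * Matrix.diagonal (fun i => (d i)⁻¹) = 1 := by
    rw [Matrix.diagonal_mul_diagonal]
    have : (fun i => d i * (d i)⁻¹) = fun _ => (1:ℝ) := by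
      funext i; exact mul_inv_cancel₀ (hd i)
    rw [this, Matrix.diagonal_one]
  have hinv2 : (U * Matrix.diagonal d * star U) *
      (U * Matrix.diagonal (fun i => (d i)⁻¹) * star U) = 1 := by
    calc U * Matrix.diagonal d * star U * (U * Matrix.diagonal (fun i => (d i)⁻¹) * star U)
        = U * (Matrix.diagonal d * (star U * U) * Matrix.diagonal (fun i => (d i)⁻¹)) * star U := by
          noncomm_ring
      _ = 1 := by rw [hUU', mul_one, key, mul_one, hUU]
  rw [Matrix.inv_eq_right_inv hinv2, Matrix.trace_mul_comm, ← mul_assoc, hUU', one_mul,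
    Matrix.trace_diagonal]

theorem stmt_6 (n : ℕ) (α : Measure ℝ) [IsProbabilityMeasure α]
    (hsupp : (measSupport α).Infinite)
    (hint : ∀ k ≤ 2 * n, Integrable (fun x : ℝ => x ^ k) α)
    (p : ℕ → Polynomial ℝ)
    (hdeg : ∀ k, (p k).natDegree = k)
    (hlead : ∀ k, 0 < (p k).leadingCoeff)
    (horth : ∀ j k, ∫ x, (p j).eval x * (p k).eval x ∂α = if j = k then 1 else 0)
    (hM : (momMatrix α n).IsHermitian)
    (ξ : Fin (n + 1) → ℝ) (hmono : Monotone ξ)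
    (hperm : ∃ σ : Equiv.Perm (Fin (n + 1)), ∀ i, ξ i = hM.eigenvalues (σ i)) :
    (∀ j k : Fin (n + 1),
      (1 / (2 * Real.pi)) •
        (∫ t in (0:ℝ)..(2 * Real.pi),
          (Polynomial.aeval (Complex.exp (Complex.I * (t : ℂ))) (p (j : ℕ))) *
            (Polynomial.aeval (Complex.exp (-(Complex.I * (t : ℂ)))) (p (k : ℕ)))) =
        ((PiMat p n * (PiMat p n)ᵀ) j k : ℂ)) ∧
    ((1 / (2 * Real.pi)) * ∑ j ∈ Finset.range (n + 1),
        ∫ t in (0:ℝ)..(2 * Real.pi),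
          ‖Polynomial.aeval (Complex.exp (Complex.I * (t : ℂ))) (p j)‖ ^ 2 =
      ((momMatrix α n)⁻¹).trace) ∧
    (((momMatrix α n)⁻¹).trace = ∑ j, 1 / ξ j) := by
  have hπ : (2 * Real.pi) ≠ 0 := by positivity
  have hPMP := PiMomPi n α hint p hdeg horth
  -- inverse of moment matrix
  have h' := hPMP
  rw [mul_assoc] at h'
  have h2 : momMatrix α n * ((PiMat p n)ᵀ * PiMat p n) = 1 := by
    have h'' := mul_eq_one_comm.mp h'
    rw [mul_assoc] at h''
    exact h''
  have hMinv : (momMatrix α n)⁻¹ = (PiMat p n)ᵀ * PiMat p n := Matrix.inv_eq_right_inv h2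
  -- part 1
  have part1 : ∀ j k : Fin (n + 1),
      (1 / (2 * Real.pi)) •
        (∫ t in (0:ℝ)..(2 * Real.pi),
          (Polynomial.aeval (Complex.exp (Complex.I * (t : ℂ))) (p (j : ℕ))) *
            (Polynomial.aeval (Complex.exp (-(Complex.I * (t : ℂ)))) (p (k : ℕ)))) =
        ((PiMat p n * (PiMat p n)ᵀ) j k : ℂ) := by
    intro j k
    have hj : (p (j:ℕ)).natDegree < n + 1 := by rw [hdeg]; exact j.2
    have hk : (p (k:ℕ)).natDegree < n + 1 := by rw [hdeg]; exact k.2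
    rw [integral_poly_orth n _ _ hj hk]
    have hRHS : ((PiMat p n * (PiMat p n)ᵀ) j k : ℂ)
        = ∑ i ∈ Finset.range (n+1), ((p (j:ℕ)).coeff i : ℂ) * ((p (k:ℕ)).coeff i) := by
      simp only [Matrix.mul_apply, Matrix.transpose_apply, PiMat, Matrix.of_apply]
      rw [Fin.sum_univ_eq_sum_range (fun i => (p (j:ℕ)).coeff i * (p (k:ℕ)).coeff i)]
      push_cast
      rfl
    rw [hRHS, Complex.real_smul]
    rw [← mul_assoc]
    norm_cast
    rw [one_div, inv_mul_cancel₀ hπ, one_mul]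
  refine ⟨part1, ?_, ?_⟩
  · -- part 2
    have hjint : ∀ j ∈ Finset.range (n+1),
        (∫ t in (0:ℝ)..(2 * Real.pi),
          ‖Polynomial.aeval (Complex.exp (Complex.I * (t : ℂ))) (p j)‖ ^ 2)
        = (2 * Real.pi) * ∑ i ∈ Finset.range (n+1), (p j).coeff i ^ 2 := by
      intro j hjmem
      have hj : (p j).natDegree < n + 1 := by
        rw [hdeg]; exact Finset.mem_range.mp hjmem
      have hconj : ∀ t : ℝ,
          (starRingEnd ℂ) (Polynomial.aeval (Complex.exp (Complex.I * (t:ℂ))) (p j))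
          = Polynomial.aeval (Complex.exp (-(Complex.I * (t:ℂ)))) (p j) := by
        intro t
        rw [← Polynomial.aeval_conj]
        congr 1
        rw [← Complex.exp_conj]
        congr 1
        simp [Complex.conj_I]
      have hpt : ∀ t : ℝ,
          ((‖Polynomial.aeval (Complex.exp (Complex.I * (t:ℂ))) (p j)‖ ^ 2 : ℝ) : ℂ)
          = (Polynomial.aeval (Complex.exp (Complex.I * (t:ℂ))) (p j)) *
            (Polynomial.aeval (Complex.exp (-(Complex.I * (t:ℂ)))) (p j)) := by
        intro t
        rw [← hconj t, Complex.mul_conj]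
        exact congrArg _ (Complex.sq_norm _)
      have : ((∫ t in (0:ℝ)..(2 * Real.pi),
            ‖Polynomial.aeval (Complex.exp (Complex.I * (t : ℂ))) (p j)‖ ^ 2 : ℝ) : ℂ)
          = (2 * Real.pi : ℂ) * ∑ i ∈ Finset.range (n+1),
              ((p j).coeff i : ℂ) * ((p j).coeff i) := by
        have hofreal : (∫ t in (0:ℝ)..(2*Real.pi),
            ((‖Polynomial.aeval (Complex.exp (Complex.I * (t:ℂ))) (p j)‖ ^ 2 : ℝ) : ℂ))
            = ((∫ t in (0:ℝ)..(2 * Real.pi),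
              ‖Polynomial.aeval (Complex.exp (Complex.I * (t : ℂ))) (p j)‖ ^ 2 : ℝ) : ℂ) :=
          RCLike.intervalIntegral_ofReal
        rw [← hofreal]
        simp only [hpt]
        exact integral_poly_orth n _ _ hj hj
      have := this
      rw [show ((2 * Real.pi : ℂ) * ∑ i ∈ Finset.range (n+1),
            ((p j).coeff i : ℂ) * ((p j).coeff i))
          = (((2 * Real.pi) * ∑ i ∈ Finset.range (n+1), (p j).coeff i ^ 2 : ℝ) : ℂ) by
        push_cast; ring_nf] at this
      exact_mod_cast this
    rw [Finset.sum_congr rfl hjint, ← Finset.mul_sum, ← mul_assoc, one_div,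
      inv_mul_cancel₀ hπ, one_mul, hMinv, Matrix.trace_mul_comm]
    have hdiagval : ∀ i : Fin (n+1), (PiMat p n * (PiMat p n)ᵀ).diag i
        = ∑ l ∈ Finset.range (n+1), (p (i:ℕ)).coeff l ^ 2 := by
      intro i
      simp only [Matrix.diag_apply, Matrix.mul_apply, Matrix.transpose_apply, PiMat,
        Matrix.of_apply]
      rw [Fin.sum_univ_eq_sum_range (fun l => (p (i:ℕ)).coeff l * (p (i:ℕ)).coeff l)]
      exact Finset.sum_congr rfl fun l _ => (sq _).symm
    rw [Matrix.trace]
    simp only [hdiagval]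
    rw [Fin.sum_univ_eq_sum_range (fun i => ∑ l ∈ Finset.range (n+1), (p i).coeff l ^ 2)]
  · -- part 3
    obtain ⟨σ, hσ⟩ := hperm
    have hdet : IsUnit (momMatrix α n).det := by
      have := congrArg Matrix.det h2
      rw [Matrix.det_mul, Matrix.det_one] at this
      exact IsUnit.of_mul_eq_one _ this
    have hev : ∀ i, hM.eigenvalues i ≠ 0 := by
      intro i hi
      have hd := hM.det_eq_prod_eigenvalues
      have : (momMatrix α n).det = 0 := by
        rw [hd]
        exact Finset.prod_eq_zero (Finset.mem_univ i) (by exact_mod_cast hi)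
      exact hdet.ne_zero this
    have htr : (momMatrix α n)⁻¹.trace = ∑ i, (hM.eigenvalues i)⁻¹ := by
      refine trace_inv_spectral _ _ hM.eigenvalues
        ((Matrix.mem_unitaryGroup_iff).mp hM.eigenvectorUnitary.2)
        ((Matrix.mem_unitaryGroup_iff').mp hM.eigenvectorUnitary.2) ?_ hev
      have := hM.spectral_theorem
      rw [Unitary.conjStarAlgAut_apply] at this
      exact this
    rw [htr]
    rw [show (∑ j, 1 / ξ j) = ∑ j, (hM.eigenvalues (σ j))⁻¹ by
      refine Finset.sum_congr rfl fun j _ => ?_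
      rw [hσ j, one_div]]
    exact (Equiv.sum_comp σ (fun i => (hM.eigenvalues i)⁻¹)).symm
end

section
/- Let α be a Borel probability measure on ℝ with infinite support and finite moments up to order 2n, with orthonormal polynomials (p_j)_{j=0}^n and eigenvalues ξ_{0,n} ≤ … ≤ ξ_{n,n} of M_n(α). Then 1/ξ_{n,n} ≤ Σ_{j=0}^{n} p_j(0)² = (M_n(α)^{-1})_{0,0} ≤ 1/ξ_{0,n}. -/
open MeasureTheory Matrix

theorem stmt_7 (n : ℕ) (α : Measure ℝ) [IsProbabilityMeasure α]
    (hsupp : (measSupport α).Infinite)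
    (hint : ∀ k ≤ 2 * n, Integrable (fun x : ℝ => x ^ k) α)
    (p : ℕ → Polynomial ℝ)
    (hdeg : ∀ k, (p k).natDegree = k)
    (hlead : ∀ k, 0 < (p k).leadingCoeff)
    (horth : ∀ j k, ∫ x, (p j).eval x * (p k).eval x ∂α = if j = k then 1 else 0)
    (hM : (momMatrix α n).IsHermitian)
    (ξ : Fin (n + 1) → ℝ) (hmono : Monotone ξ)
    (hperm : ∃ σ : Equiv.Perm (Fin (n + 1)), ∀ i, ξ i = hM.eigenvalues (σ i)) :
    1 / ξ (Fin.last n) ≤ ∑ j ∈ Finset.range (n + 1), (p j).eval 0 ^ 2 ∧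
    ∑ j ∈ Finset.range (n + 1), (p j).eval 0 ^ 2 = (momMatrix α n)⁻¹ 0 0 ∧
    (momMatrix α n)⁻¹ 0 0 ≤ 1 / ξ 0 := by
  classical
  set M := momMatrix α n with hMdef
  set P : Matrix (Fin (n + 1)) (Fin (n + 1)) ℝ :=
    Matrix.of (fun i j => (p (i : ℕ)).coeff (j : ℕ)) with hPdef
  -- evaluation as a sum over Fin (n+1)
  have hev : ∀ (j : Fin (n + 1)) (x : ℝ),
      (p (j : ℕ)).eval x = ∑ a : Fin (n + 1), (p (j : ℕ)).coeff (a : ℕ) * x ^ (a : ℕ) := by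
    intro j x
    rw [Polynomial.eval_eq_sum_range' (n := n + 1) (by rw [hdeg]; exact j.isLt) x]
    rw [Fin.sum_univ_eq_sum_range (fun a => (p (j : ℕ)).coeff a * x ^ a)]
  -- the key identity : P * M * Pᵀ = 1
  have key : P * M * Pᵀ = 1 := by
    ext j k
    have hint2 : ∀ a b : Fin (n + 1),
        Integrable (fun x : ℝ =>
          (p (j : ℕ)).coeff (a : ℕ) * (p (k : ℕ)).coeff (b : ℕ) * x ^ ((a : ℕ) + (b : ℕ))) α := by
      intro a b
      exact (hint _ (by have := a.isLt; have := b.isLt; omega)).const_mul _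
    have hfun : (fun x : ℝ => (p (j : ℕ)).eval x * (p (k : ℕ)).eval x) =
        fun x : ℝ => ∑ a : Fin (n + 1), ∑ b : Fin (n + 1),
          (p (j : ℕ)).coeff (a : ℕ) * (p (k : ℕ)).coeff (b : ℕ) * x ^ ((a : ℕ) + (b : ℕ)) := by
      funext x
      rw [hev j x, hev k x, Finset.sum_mul_sum]
      refine Finset.sum_congr rfl fun a _ => Finset.sum_congr rfl fun b _ => ?_
      rw [pow_add]; ring
    have hI : ∫ x, (p (j : ℕ)).eval x * (p (k : ℕ)).eval x ∂α =
        ∑ a : Fin (n + 1), ∑ b : Fin (n + 1),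
          (p (j : ℕ)).coeff (a : ℕ) * (p (k : ℕ)).coeff (b : ℕ) * mom α ((a : ℕ) + (b : ℕ)) := by
      rw [hfun, integral_finset_sum _ (fun a _ => integrable_finset_sum _ (fun b _ => hint2 a b))]
      refine Finset.sum_congr rfl fun a _ => ?_
      rw [integral_finset_sum _ (fun b _ => hint2 a b)]
      refine Finset.sum_congr rfl fun b _ => ?_
      rw [mom, integral_const_mul]
    have hentry : (P * M * Pᵀ) j k =
        ∑ a : Fin (n + 1), ∑ b : Fin (n + 1),
          (p (j : ℕ)).coeff (a : ℕ) * (p (k : ℕ)).coeff (b : ℕ) * mom α ((a : ℕ) + (b : ℕ)) := by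
      simp only [Matrix.mul_apply, Matrix.transpose_apply, Finset.sum_mul, Finset.mul_sum]
      rw [Finset.sum_comm]
      refine Finset.sum_congr rfl fun a _ => Finset.sum_congr rfl fun b _ => ?_
      simp only [hPdef, hMdef, momMatrix, Matrix.of_apply]
      ring
    rw [hentry, ← hI, horth]
    by_cases h : j = k
    · simp [h, Matrix.one_apply]
    · have : (j : ℕ) ≠ (k : ℕ) := fun hc => h (Fin.ext hc)
      simp [this, Matrix.one_apply, h]
  -- invertibility
  have hdetP : IsUnit P.det := by
    have h1 : P.det * (M.det * Pᵀ.det) = 1 := by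
      rw [← mul_assoc, ← Matrix.det_mul, ← Matrix.det_mul, key, Matrix.det_one]
    exact IsUnit.of_mul_eq_one _ h1
  have hdetM : IsUnit M.det := by
    have h1 : M.det * (P.det * Pᵀ.det) = 1 := by
      have : P.det * M.det * Pᵀ.det = 1 := by
        rw [← Matrix.det_mul, ← Matrix.det_mul, key, Matrix.det_one]
      linarith [this, mul_comm P.det M.det]
    exact IsUnit.of_mul_eq_one _ h1
  -- M⁻¹ = Pᵀ * P
  have hPinv : P⁻¹ = M * Pᵀ := Matrix.inv_eq_right_inv (by rw [← mul_assoc]; exact key)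
  have hMPtP : M * (Pᵀ * P) = 1 := by
    rw [← mul_assoc, ← hPinv, Matrix.nonsing_inv_mul P hdetP]
  have hMinv : M⁻¹ = Pᵀ * P := Matrix.inv_eq_right_inv hMPtP
  -- the middle equality
  have hmid : ∑ j ∈ Finset.range (n + 1), (p j).eval 0 ^ 2 = M⁻¹ 0 0 := by
    rw [hMinv]
    rw [Matrix.mul_apply]
    rw [← Fin.sum_univ_eq_sum_range (fun j => (p j).eval 0 ^ 2)]
    refine Finset.sum_congr rfl fun i _ => ?_
    simp [hPdef, Polynomial.coeff_zero_eq_eval_zero, pow_two]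
  -- M is positive semidefinite
  have hMt : Mᵀ = M := by
    have := hM.eq
    rwa [Matrix.conjTranspose_eq_transpose_of_trivial] at this
  have h1 : (Pᵀ * P) * M = 1 := mul_eq_one_comm.mp hMPtP
  have hfact : M = P⁻¹ * (P⁻¹)ᴴ := by
    rw [Matrix.conjTranspose_eq_transpose_of_trivial, hPinv, Matrix.transpose_mul,
      Matrix.transpose_transpose, hMt, mul_assoc M Pᵀ, ← mul_assoc Pᵀ P M, h1, mul_one]
  have hpsd : M.PosSemidef := by
    rw [hfact]
    simpa using (Matrix.PosSemidef.one (n := Fin (n + 1)) (R := ℝ)).mul_mul_conjTranspose_same P⁻¹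
  -- eigenvalues are positive
  have heignn : ∀ i, 0 ≤ hM.eigenvalues i := fun i => hpsd.eigenvalues_nonneg i
  have heigne : ∀ i, hM.eigenvalues i ≠ 0 := by
    have hprod : ∏ i, hM.eigenvalues i ≠ 0 := by
      have := hM.det_eq_prod_eigenvalues
      simp only [RCLike.ofReal_real_eq_id, id_eq, Function.comp] at this
      rw [← this]
      exact hdetM.ne_zero
    intro i hi
    exact hprod (Finset.prod_eq_zero (Finset.mem_univ i) hi)
  have heigpos : ∀ i, 0 < hM.eigenvalues i := fun i => (heignn i).lt_of_ne' (heigne i)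
  -- spectral decomposition of M⁻¹
  set U : Matrix (Fin (n + 1)) (Fin (n + 1)) ℝ := ((hM.eigenvectorUnitary : Matrix.unitaryGroup (Fin (n + 1)) ℝ) : Matrix (Fin (n + 1)) (Fin (n + 1)) ℝ)
    with hUdef
  have hsUU : star U * U = 1 := Matrix.mem_unitaryGroup_iff'.mp (hM.eigenvectorUnitary).2
  have hUsU : U * star U = 1 := Matrix.mem_unitaryGroup_iff.mp (hM.eigenvectorUnitary).2
  have hspec : M = U * Matrix.diagonal hM.eigenvalues * star U := by
    have := hM.spectral_theorem
    simpa [hUdef, Function.comp] using this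
  have hDD : Matrix.diagonal hM.eigenvalues *
      Matrix.diagonal (fun i => (hM.eigenvalues i)⁻¹) = 1 := by
    rw [Matrix.diagonal_mul_diagonal]
    have hfun : (fun i => hM.eigenvalues i * (hM.eigenvalues i)⁻¹) = fun _ : Fin (n + 1) => (1 : ℝ) :=
      funext fun i => mul_inv_cancel₀ (heigne i)
    rw [hfun, Matrix.diagonal_one]
  have hinv : M⁻¹ = U * Matrix.diagonal (fun i => (hM.eigenvalues i)⁻¹) * star U := by
    apply Matrix.inv_eq_right_inv
    nth_rewrite 1 [hspec]
    have hassoc : U * Matrix.diagonal hM.eigenvalues * star U *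
        (U * Matrix.diagonal (fun i => (hM.eigenvalues i)⁻¹) * star U) =
        U * (Matrix.diagonal hM.eigenvalues * ((star U * U) *
          (Matrix.diagonal (fun i => (hM.eigenvalues i)⁻¹) * star U))) := by
      simp only [mul_assoc]
    rw [hassoc, hsUU, one_mul, ← mul_assoc (Matrix.diagonal hM.eigenvalues), hDD, one_mul, hUsU]
  have hentry : M⁻¹ 0 0 = ∑ i, (hM.eigenvalues i)⁻¹ * (U 0 i) ^ 2 := by
    rw [hinv, Matrix.mul_apply]
    have hd : ∀ x, (U * Matrix.diagonal fun i => (hM.eigenvalues i)⁻¹) 0 x =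
        U 0 x * (hM.eigenvalues x)⁻¹ := fun x => Matrix.mul_diagonal _ _ _ _
    simp only [hd, Matrix.star_apply, star_trivial]
    refine Finset.sum_congr rfl fun i _ => ?_
    ring
  have hnorm : ∑ i, (U 0 i) ^ 2 = 1 := by
    have h0 := congrArg (fun A : Matrix (Fin (n + 1)) (Fin (n + 1)) ℝ => A 0 0) hUsU
    simp only [Matrix.mul_apply, Matrix.star_apply, star_trivial, Matrix.one_apply_eq] at h0
    rw [← h0]
    exact Finset.sum_congr rfl fun i _ => pow_two (U 0 i)
  -- eigenvalue bounds via the permutation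
  obtain ⟨σ, hσ⟩ := hperm
  have hlb : ∀ i, ξ 0 ≤ hM.eigenvalues i := by
    intro i
    have h := hσ (σ.symm i)
    rw [Equiv.apply_symm_apply] at h
    rw [← h]
    exact hmono (Fin.zero_le _)
  have hub : ∀ i, hM.eigenvalues i ≤ ξ (Fin.last n) := by
    intro i
    have h := hσ (σ.symm i)
    rw [Equiv.apply_symm_apply] at h
    rw [← h]
    exact hmono (Fin.le_last _)
  have hξ0pos : 0 < ξ 0 := by rw [hσ 0]; exact heigpos _
  have hξlpos : 0 < ξ (Fin.last n) := by rw [hσ (Fin.last n)]; exact heigpos _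
  rw [hmid]
  refine ⟨?_, rfl, ?_⟩
  · -- lower bound
    rw [hentry, one_div, ← one_mul (ξ (Fin.last n))⁻¹, ← hnorm, Finset.sum_mul]
    refine Finset.sum_le_sum fun i _ => ?_
    rw [mul_comm ((U 0 i) ^ 2)]
    refine mul_le_mul_of_nonneg_right ?_ (sq_nonneg _)
    exact inv_anti₀ (heigpos i) (hub i)
  · -- upper bound
    rw [hentry, one_div, ← one_mul (ξ 0)⁻¹, ← hnorm, Finset.sum_mul]
    refine Finset.sum_le_sum fun i _ => ?_
    rw [mul_comm ((U 0 i) ^ 2)]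
    refine mul_le_mul_of_nonneg_right ?_ (sq_nonneg _)
    exact inv_anti₀ hξ0pos (hlb i)
end

section
/- Let α be a Borel probability measure on ℝ with infinite support and all moments finite, with orthonormal polynomials (p_n)_{n≥0}. Then for α-almost every x: (1/(√(n+1) · (log(n+2))²)) Σ_{i=0}^{n} p_i(x) → 0 as n → ∞. -/
open MeasureTheory Finset

section aux
variable (α : Measure ℝ) [IsProbabilityMeasure α]

lemma integrable_poly (hint : ∀ k, Integrable (fun x : ℝ => x ^ k) α)
    (q : Polynomial ℝ) : Integrable (fun x => q.eval x) α := by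
  have h : (fun x : ℝ => q.eval x)
      = fun x => ∑ i ∈ Finset.range (q.natDegree + 1), q.coeff i * x ^ i := by
    funext x
    rw [Polynomial.eval_eq_sum_range]
  rw [h]
  exact integrable_finset_sum _ (fun i _ => (hint i).const_mul _)

variable (p : ℕ → Polynomial ℝ)

lemma integrable_mul_eval (hint : ∀ k, Integrable (fun x : ℝ => x ^ k) α) (j k : ℕ) :
    Integrable (fun x => (p j).eval x * (p k).eval x) α := by
  simpa [Polynomial.eval_mul] using integrable_poly α hint (p j * p k)

lemma integrable_sq_sum (hint : ∀ k, Integrable (fun x : ℝ => x ^ k) α) (s : Finset ℕ) :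
    Integrable (fun x => (∑ i ∈ s, (p i).eval x) ^ 2) α := by
  have h : (fun x : ℝ => (∑ i ∈ s, (p i).eval x) ^ 2)
      = fun x => Polynomial.eval x ((∑ i ∈ s, p i) ^ 2) := by
    funext x; simp [Polynomial.eval_pow, Polynomial.eval_finset_sum]
  rw [h]
  exact integrable_poly α hint _

lemma integral_sq_sum (hint : ∀ k, Integrable (fun x : ℝ => x ^ k) α)
    (horth : ∀ j k, ∫ x, (p j).eval x * (p k).eval x ∂α = if j = k then 1 else 0)
    (s : Finset ℕ) :
    ∫ x, (∑ i ∈ s, (p i).eval x) ^ 2 ∂α = s.card := by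
  have h : ∀ x : ℝ, (∑ i ∈ s, (p i).eval x) ^ 2
      = ∑ i ∈ s, ∑ j ∈ s, (p i).eval x * (p j).eval x := by
    intro x; rw [sq, Finset.sum_mul_sum]
  simp_rw [h]
  rw [integral_finset_sum _ (fun i _ =>
    integrable_finset_sum _ (fun j _ => integrable_mul_eval α p hint i j))]
  have h2 : ∀ i ∈ s, ∫ x, ∑ j ∈ s, (p i).eval x * (p j).eval x ∂α
      = ∑ j ∈ s, if i = j then (1:ℝ) else 0 := by
    intro i _
    rw [integral_finset_sum _ (fun j _ => integrable_mul_eval α p hint i j)]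
    exact Finset.sum_congr rfl (fun j _ => horth i j)
  rw [Finset.sum_congr rfl h2]
  simp

end aux
open MeasureTheory Finset

noncomputable def Dsum (p : ℕ → Polynomial ℝ) (a b : ℕ) (x : ℝ) : ℝ :=
  ∑ i ∈ Finset.Ico a b, (p i).eval x

noncomputable def Vsum (p : ℕ → Polynomial ℝ) (a k : ℕ) (x : ℝ) : ℝ :=
  ∑ j ∈ Finset.range (k+1), ∑ l ∈ Finset.range (2^(k-j)),
    (Dsum p (a + l*2^j) (a + (l+1)*2^j) x)^2

variable (p : ℕ → Polynomial ℝ)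

lemma Vsum_nonneg (a k : ℕ) (x : ℝ) : 0 ≤ Vsum p a k x :=
  Finset.sum_nonneg fun j _ => Finset.sum_nonneg fun l _ => sq_nonneg _

lemma Dsum_add (a b c : ℕ) (hab : a ≤ b) (hbc : b ≤ c) (x : ℝ) :
    Dsum p a c x = Dsum p a b x + Dsum p b c x :=
  (Finset.sum_Ico_consecutive _ hab hbc).symm

lemma Vsum_succ (a k : ℕ) (x : ℝ) :
    Vsum p a (k+1) x
      = Vsum p a k x + Vsum p (a + 2^k) k x + (Dsum p a (a + 2^(k+1)) x)^2 := by
  unfold Vsum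
  rw [Finset.sum_range_succ]
  have htop : ∑ l ∈ Finset.range (2^(k+1-(k+1))),
      (Dsum p (a + l*2^(k+1)) (a + (l+1)*2^(k+1)) x)^2
      = (Dsum p a (a + 2^(k+1)) x)^2 := by
    simp
  rw [htop]
  congr 1
  have hsplit : ∀ j ∈ Finset.range (k+1),
      ∑ l ∈ Finset.range (2^(k+1-j)), (Dsum p (a + l*2^j) (a + (l+1)*2^j) x)^2
      = (∑ l ∈ Finset.range (2^(k-j)), (Dsum p (a + l*2^j) (a + (l+1)*2^j) x)^2)
        + ∑ l ∈ Finset.range (2^(k-j)),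
            (Dsum p ((a + 2^k) + l*2^j) ((a + 2^k) + (l+1)*2^j) x)^2 := by
    intro j hj
    have hj' : j ≤ k := Nat.lt_succ_iff.mp (Finset.mem_range.mp hj)
    have h1 : 2^(k+1-j) = 2^(k-j) + 2^(k-j) := by
      have : k+1-j = (k-j)+1 := by omega
      rw [this, pow_succ]; ring
    rw [h1, Finset.sum_range_add]
    congr 1
    apply Finset.sum_congr rfl
    intro l _
    have hkj : 2^(k-j) * 2^j = 2^k := by
      rw [← pow_add]; congr 1; omega
    have e1 : a + (2^(k-j)+l)*2^j = (a + 2^k) + l*2^j := by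
      rw [add_mul, hkj]; omega
    have e2 : a + (2^(k-j)+l+1)*2^j = (a + 2^k) + (l+1)*2^j := by
      rw [add_mul, add_mul, hkj, add_mul]; omega
    rw [e1, e2]
  rw [Finset.sum_congr rfl hsplit, Finset.sum_add_distrib]

lemma sq_Dsum_le_Vsum (a k : ℕ) (x : ℝ) :
    (Dsum p a (a + 2^k) x)^2 ≤ Vsum p a k x := by
  unfold Vsum
  have h2 := Finset.single_le_sum
    (f := fun j => ∑ l ∈ Finset.range (2^(k-j)), (Dsum p (a + l*2^j) (a + (l+1)*2^j) x)^2)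
    (fun j _ => Finset.sum_nonneg fun l _ => sq_nonneg _)
    (Finset.self_mem_range_succ k)
  refine le_trans (le_of_eq ?_) h2
  simp only [Nat.sub_self, pow_zero, Finset.sum_range_one]
  norm_num

lemma chain (k : ℕ) : ∀ a t : ℕ, t ≤ 2^k → ∀ x : ℝ,
    (Dsum p a (a + t) x)^2 ≤ (k+1 : ℝ) * Vsum p a k x := by
  induction k with
  | zero =>
    intro a t ht x
    interval_cases t
    · simp [Dsum, Vsum_nonneg]
    · have : (Dsum p a (a+1) x)^2 ≤ Vsum p a 0 x := by
        simpa using sq_Dsum_le_Vsum p a 0 x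
      simpa using this
  | succ k ih =>
    intro a t ht x
    by_cases h : t ≤ 2^k
    · have h1 := ih a t h x
      have h2 : Vsum p a k x ≤ Vsum p a (k+1) x := by
        rw [Vsum_succ]
        nlinarith [Vsum_nonneg p (a + 2^k) k x, sq_nonneg (Dsum p a (a + 2^(k+1)) x)]
      have h3 : (0:ℝ) ≤ Vsum p a (k+1) x := Vsum_nonneg p a (k+1) x
      have hk : (0:ℝ) ≤ (k:ℝ) + 1 := by positivity
      push_cast
      nlinarith [mul_le_mul_of_nonneg_left h2 hk]
    · push_neg at h
      set s := t - 2^k with hs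
      have hs2 : s ≤ 2^k := by
        have : 2^(k+1) = 2^k + 2^k := by rw [pow_succ]; ring
        omega
      have hts : a + t = (a + 2^k) + s := by omega
      have hD : Dsum p a (a+t) x
          = Dsum p a (a + 2^k) x + Dsum p (a + 2^k) ((a + 2^k) + s) x := by
        rw [hts]
        exact Dsum_add p a (a+2^k) ((a+2^k)+s) (by omega) (by omega) x
      set X := Dsum p a (a + 2^k) x
      set Y := Dsum p (a + 2^k) ((a + 2^k) + s) x
      have hx : X^2 ≤ Vsum p a k x := sq_Dsum_le_Vsum p a k x
      have hy : Y^2 ≤ (k+1 : ℝ) * Vsum p (a + 2^k) k x := ih (a + 2^k) s hs2 x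
      have hV : Vsum p a k x + Vsum p (a + 2^k) k x ≤ Vsum p a (k+1) x := by
        rw [Vsum_succ]
        nlinarith [sq_nonneg (Dsum p a (a + 2^(k+1)) x)]
      rw [hD]
      have hA : (0:ℝ) ≤ Vsum p a k x := Vsum_nonneg p a k x
      have hB : (0:ℝ) ≤ Vsum p (a + 2^k) k x := Vsum_nonneg p (a + 2^k) k x
      have e1 : ((k:ℝ)+1) * (X+Y)^2 ≤ ((k:ℝ)+1)*((k:ℝ)+2)*X^2 + ((k:ℝ)+2)*Y^2 := by
        nlinarith [sq_nonneg (((k:ℝ)+1)*X - Y)]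
      have e2 : ((k:ℝ)+1)*((k:ℝ)+2)*X^2 ≤ ((k:ℝ)+1)*((k:ℝ)+2)*(Vsum p a k x) :=
        mul_le_mul_of_nonneg_left hx (by positivity)
      have e3 : ((k:ℝ)+2)*Y^2 ≤ ((k:ℝ)+2)*(((k:ℝ)+1) * Vsum p (a + 2^k) k x) :=
        mul_le_mul_of_nonneg_left hy (by positivity)
      have e4 : ((k:ℝ)+1)*((k:ℝ)+2)*(Vsum p a k x + Vsum p (a + 2^k) k x)
          ≤ ((k:ℝ)+1)*((k:ℝ)+2)*(Vsum p a (k+1) x) :=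
        mul_le_mul_of_nonneg_left hV (by positivity)
      have key : ((k:ℝ)+1) * (X+Y)^2
          ≤ ((k:ℝ)+1) * (((k:ℝ)+2) * Vsum p a (k+1) x) := by nlinarith
      have hk1 : (0:ℝ) < (k:ℝ)+1 := by positivity
      have := (mul_le_mul_iff_right₀ hk1).mp key
      push_cast
      linarith

section integrals
variable (α : Measure ℝ) [IsProbabilityMeasure α] (p : ℕ → Polynomial ℝ)
variable (hint : ∀ k, Integrable (fun x : ℝ => x ^ k) α)
variable (horth : ∀ j k, ∫ x, (p j).eval x * (p k).eval x ∂α = if j = k then 1 else 0)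

include hint

lemma integrable_Dsum_sq (a b : ℕ) : Integrable (fun x => (Dsum p a b x)^2) α := by
  simpa [Dsum] using integrable_sq_sum α p hint (Finset.Ico a b)

include horth in
lemma integral_Dsum_sq (a b : ℕ) :
    ∫ x, (Dsum p a b x)^2 ∂α = ((b - a : ℕ) : ℝ) := by
  have := integral_sq_sum α p hint horth (Finset.Ico a b)
  simpa [Dsum, Nat.card_Ico] using this

lemma integrable_Vsum (a k : ℕ) : Integrable (fun x => Vsum p a k x) α := by
  have : (fun x => Vsum p a k x) = fun x => ∑ j ∈ Finset.range (k+1),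
      ∑ l ∈ Finset.range (2^(k-j)), (Dsum p (a + l*2^j) (a + (l+1)*2^j) x)^2 := by
    funext x; rfl
  rw [this]
  exact integrable_finset_sum _ (fun j _ =>
    integrable_finset_sum _ (fun l _ => integrable_Dsum_sq α p hint _ _))

include horth in
lemma integral_Vsum (a k : ℕ) :
    ∫ x, Vsum p a k x ∂α = ((k : ℝ) + 1) * 2^k := by
  have h : (fun x => Vsum p a k x) = fun x => ∑ j ∈ Finset.range (k+1),
      ∑ l ∈ Finset.range (2^(k-j)), (Dsum p (a + l*2^j) (a + (l+1)*2^j) x)^2 := by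
    funext x; rfl
  rw [h, integral_finset_sum _ (fun j _ =>
    integrable_finset_sum _ (fun l _ => integrable_Dsum_sq α p hint _ _))]
  have h2 : ∀ j ∈ Finset.range (k+1),
      ∫ x, ∑ l ∈ Finset.range (2^(k-j)), (Dsum p (a + l*2^j) (a + (l+1)*2^j) x)^2 ∂α
      = (2^k : ℝ) := by
    intro j hj
    have hj' : j ≤ k := Nat.lt_succ_iff.mp (Finset.mem_range.mp hj)
    rw [integral_finset_sum _ (fun l _ => integrable_Dsum_sq α p hint _ _)]
    have h3 : ∀ l ∈ Finset.range (2^(k-j)),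
        ∫ x, (Dsum p (a + l*2^j) (a + (l+1)*2^j) x)^2 ∂α = ((2^j : ℕ) : ℝ) := by
      intro l _
      have hc : (a + (l+1)*2^j) - (a + l*2^j) = 2^j := by
        generalize 2^j = b
        rw [add_mul, one_mul]; omega
      rw [integral_Dsum_sq α p hint horth, hc]
    rw [Finset.sum_congr rfl h3, Finset.sum_const, Finset.card_range, nsmul_eq_mul]
    push_cast
    rw [← pow_add]
    congr 1
    omega
  rw [Finset.sum_congr rfl h2, Finset.sum_const, Finset.card_range]
  push_cast
  ring

end integrals

set_option maxHeartbeats 1000000 in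
theorem stmt_9 (α : Measure ℝ) [IsProbabilityMeasure α]
    (hsupp : (measSupport α).Infinite)
    (hint : ∀ k, Integrable (fun x : ℝ => x ^ k) α)
    (p : ℕ → Polynomial ℝ)
    (hdeg : ∀ k, (p k).natDegree = k)
    (hlead : ∀ k, 0 < (p k).leadingCoeff)
    (horth : ∀ j k, ∫ x, (p j).eval x * (p k).eval x ∂α = if j = k then 1 else 0) :
    ∀ᵐ x ∂α, Filter.Tendsto
      (fun n : ℕ =>
        (1 / (Real.sqrt ((n : ℝ) + 1) * Real.log ((n : ℝ) + 2) ^ 2)) *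
          ∑ i ∈ Finset.range (n + 1), (p i).eval x)
      Filter.atTop (nhds 0) := by
  classical
  set g : ℕ → ℝ → ℝ := fun k x => (Dsum p 0 (2^k) x)^2 + ((k:ℝ)+1) * Vsum p (2^k) k x
    with hg_def
  have hg_nonneg : ∀ k x, 0 ≤ g k x := fun k x =>
    add_nonneg (sq_nonneg _) (mul_nonneg (by positivity) (Vsum_nonneg p _ k x))
  have hg_int : ∀ k, Integrable (g k) α := fun k =>
    ((integrable_Dsum_sq α p hint 0 (2^k)).add
      ((integrable_Vsum α p hint (2^k) k).const_mul _))
  set c : ℕ → ℝ := fun k => (2:ℝ)^k * ((k:ℝ)+1)^4 with hc_def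
  have hc_pos : ∀ k, 0 < c k := fun k => by positivity
  have hg_integral : ∀ k, ∫ x, g k x ∂α = (2:ℝ)^k + ((k:ℝ)+1)^2 * 2^k := by
    intro k
    rw [hg_def]
    simp only
    rw [integral_add (integrable_Dsum_sq α p hint 0 (2^k))
         ((integrable_Vsum α p hint (2^k) k).const_mul _),
       integral_const_mul, integral_Dsum_sq α p hint horth, integral_Vsum α p hint horth]
    simp only [Nat.sub_zero]
    push_cast
    ring
  -- summability of the normalized integrals
  have hbound : ∀ k, ∫ x, g k x / c k ∂α ≤ 2 / ((k:ℝ)+1)^2 := by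
    intro k
    rw [integral_div, hg_integral k]
    rw [div_le_div_iff₀ (hc_pos k) (by positivity)]
    have h1 : (0:ℝ) < (2:ℝ)^k := by positivity
    have h2 : (0:ℝ) ≤ (k:ℝ) := Nat.cast_nonneg k
    have hQ : (1:ℝ) ≤ ((k:ℝ)+1)^2 := by nlinarith
    simp only [hc_def]
    nlinarith [mul_nonneg (mul_nonneg h1.le (by positivity : (0:ℝ) ≤ ((k:ℝ)+1)^2))
      (by linarith : (0:ℝ) ≤ ((k:ℝ)+1)^2 - 1)]
  set u : ℕ → ℝ → ENNReal := fun k x => ENNReal.ofReal (g k x / c k) with hu_def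
  have hu_meas : ∀ k, AEMeasurable (u k) α := by
    intro k
    exact ENNReal.measurable_ofReal.comp_aemeasurable
      (((hg_int k).aestronglyMeasurable.aemeasurable).div_const _)
  have hu_lint : ∀ k, ∫⁻ x, u k x ∂α = ENNReal.ofReal (∫ x, g k x / c k ∂α) := by
    intro k
    rw [ofReal_integral_eq_lintegral_ofReal ((hg_int k).div_const _)
      (Filter.Eventually.of_forall (fun x => div_nonneg (hg_nonneg k x) (hc_pos k).le))]
  have hr_summable : Summable (fun k : ℕ => 2 / ((k:ℝ)+1)^2) := by
    have h0 : Summable (fun n : ℕ => 1 / (n:ℝ)^2) :=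
      Real.summable_one_div_nat_pow.mpr one_lt_two
    have h1 : Summable (fun n : ℕ => 1 / ((n:ℝ)+1)^2) := by
      have := (summable_nat_add_iff 1).mpr h0
      exact this.congr (fun n => by push_cast; ring)
    simpa [div_eq_mul_inv, mul_comm] using h1.mul_left 2
  have htsum : ∑' k, ∫⁻ x, u k x ∂α ≠ ⊤ := by
    have h1 : ∑' k, ∫⁻ x, u k x ∂α ≤ ∑' k : ℕ, ENNReal.ofReal (2 / ((k:ℝ)+1)^2) := by
      refine ENNReal.tsum_le_tsum (fun k => ?_)
      rw [hu_lint k]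
      exact ENNReal.ofReal_le_ofReal (hbound k)
    have h2 : ∑' k : ℕ, ENNReal.ofReal (2 / ((k:ℝ)+1)^2) ≠ ⊤ := by
      rw [← ENNReal.ofReal_tsum_of_nonneg (fun k => by positivity) hr_summable]
      exact ENNReal.ofReal_ne_top
    exact fun h => h2 (top_le_iff.mp (h ▸ h1))
  have hlt : ∫⁻ x, ∑' k, u k x ∂α ≠ ⊤ := by
    rw [lintegral_tsum hu_meas]
    exact htsum
  have hae : ∀ᵐ x ∂α, ∑' k, u k x < ⊤ :=
    ae_lt_top' (AEMeasurable.ennreal_tsum hu_meas) hlt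
  have key : ∀ᵐ x ∂α, Filter.Tendsto (fun k => g k x / c k) Filter.atTop (nhds 0) := by
    filter_upwards [hae] with x hx
    have h1 : Filter.Tendsto (fun k => u k x) Filter.atTop (nhds 0) :=
      ENNReal.tendsto_atTop_zero_of_tsum_ne_top hx.ne
    have h2 := (ENNReal.tendsto_toReal (by simp : (0:ENNReal) ≠ ⊤)).comp h1
    simp only [ENNReal.toReal_zero] at h2
    refine h2.congr (fun k => ?_)
    simp only [Function.comp, hu_def]
    exact ENNReal.toReal_ofReal (div_nonneg (hg_nonneg k x) (hc_pos k).le)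
  filter_upwards [key] with x hx
  rw [NormedAddCommGroup.tendsto_nhds_zero]
  intro ε hε
  have hlog2 : (0:ℝ) < Real.log 2 := Real.log_pos one_lt_two
  set δ : ℝ := ε * (Real.log 2)^2 / 9 with hδ_def
  have hδ : 0 < δ := by positivity
  have h1 : ∀ᶠ k in Filter.atTop, g k x / c k < δ^2 :=
    hx.eventually (gt_mem_nhds (by positivity))
  obtain ⟨K, hK⟩ := Filter.eventually_atTop.mp h1
  filter_upwards [Filter.eventually_ge_atTop (2^(max K 1))] with n hn
  -- setup
  set N := n + 1 with hN_def
  set k := Nat.log 2 N with hk_def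
  have hN0 : N ≠ 0 := by omega
  have hk1 : 2^k ≤ N := Nat.pow_log_le_self 2 hN0
  have hk2 : N < 2^(k+1) := Nat.lt_pow_succ_log_self (by norm_num) N
  have hkK : max K 1 ≤ k := by
    rw [hk_def]
    exact (Nat.le_log_iff_pow_le (by norm_num) hN0).mpr (by omega)
  have hk_ge1 : 1 ≤ k := le_trans (le_max_right K 1) hkK
  have hgk : g k x < δ^2 * c k := by
    have := hK k (le_trans (le_max_left K 1) hkK)
    exact (div_lt_iff₀ (hc_pos k)).mp this
  -- decomposition
  set A := Dsum p 0 (2^k) x with hA_def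
  set B := Dsum p (2^k) N x with hB_def
  have hT : ∑ i ∈ Finset.range (n + 1), (p i).eval x = A + B := by
    rw [hA_def, hB_def, ← Dsum_add p 0 (2^k) N (Nat.zero_le _) hk1 x]
    rw [Finset.range_eq_Ico]
    rfl
  have hgkx : g k x = A^2 + ((k:ℝ)+1) * Vsum p (2^k) k x := rfl
  have hA2 : A^2 ≤ g k x := by
    have := mul_nonneg (by positivity : (0:ℝ) ≤ (k:ℝ)+1) (Vsum_nonneg p (2^k) k x)
    linarith [hgkx]
  have hB2 : B^2 ≤ g k x := by
    have ht : N - 2^k ≤ 2^k := by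
      have : 2^(k+1) = 2^k + 2^k := by rw [pow_succ]; ring
      omega
    have hchain := chain p k (2^k) (N - 2^k) ht x
    have heq : 2^k + (N - 2^k) = N := by omega
    rw [heq] at hchain
    have hBchain : B^2 ≤ ((k:ℝ)+1) * Vsum p (2^k) k x := hchain
    have := sq_nonneg A
    linarith [hgkx]
  -- denominator facts
  set s := Real.sqrt ((n:ℝ)+1) with hs_def
  set L := Real.log ((n:ℝ)+2) with hL_def
  have hs2 : s^2 = (n:ℝ)+1 := Real.sq_sqrt (by positivity)
  have hspos : 0 < s := Real.sqrt_pos.mpr (by positivity)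
  have hcast_k : (1:ℝ) ≤ (k:ℝ) := by exact_mod_cast hk_ge1
  have hNn : ((N:ℕ):ℝ) = (n:ℝ)+1 := by rw [hN_def]; push_cast; ring
  have hpow_le : (2:ℝ)^k ≤ (n:ℝ)+1 := by
    have h := (Nat.cast_le (α := ℝ)).mpr hk1
    push_cast at h
    rw [hNn] at h
    exact h
  have hsN : (2:ℝ)^k ≤ s^2 := by rw [hs2]; exact hpow_le
  have hL : (k:ℝ) * Real.log 2 ≤ L := by
    rw [hL_def, ← Real.log_pow]
    exact Real.log_le_log (by positivity) (by linarith)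
  have hLpos : 0 < L :=
    lt_of_lt_of_le (mul_pos (by linarith : (0:ℝ) < (k:ℝ)) hlog2) hL
  have hk4 : ((k:ℝ)+1)^4 ≤ 16*(k:ℝ)^4 := by
    have h2k : (k:ℝ)+1 ≤ 2*(k:ℝ) := by linarith
    calc ((k:ℝ)+1)^4 ≤ (2*(k:ℝ))^4 := by
          apply pow_le_pow_left₀ (by positivity) h2k
      _ = 16*(k:ℝ)^4 := by ring
  have hL4 : (k:ℝ)^4 * (Real.log 2)^4 ≤ L^4 := by
    have h0 : 0 ≤ (k:ℝ) * Real.log 2 := by positivity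
    calc (k:ℝ)^4 * (Real.log 2)^4 = ((k:ℝ) * Real.log 2)^4 := by ring
      _ ≤ L^4 := pow_le_pow_left₀ h0 hL 4
  have hsq : (A+B)^2 < (ε*(s*L^2))^2 := by
    have e1 : (A+B)^2 ≤ 2*A^2 + 2*B^2 := by nlinarith [sq_nonneg (A-B)]
    have e2 : 2*A^2 + 2*B^2 ≤ 4 * g k x := by linarith
    have e3 : (4:ℝ) * g k x < 4 * (δ^2 * c k) := by linarith
    have e4 : 4 * (δ^2 * c k) ≤ 4 * δ^2 * (s^2 * ((k:ℝ)+1)^4) := by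
      have hwt : (0:ℝ) ≤ 4*δ^2*((k:ℝ)+1)^4 := by positivity
      have h := mul_le_mul_of_nonneg_left hsN hwt
      simp only [hc_def]
      nlinarith [h]
    have e5 : 4 * δ^2 * (s^2 * ((k:ℝ)+1)^4) ≤ ε^2 * (s^2 * ((k:ℝ)^4 * (Real.log 2)^4)) := by
      have hss : (0:ℝ) ≤ s^2 := sq_nonneg s
      have hd : 4 * δ^2 * ((k:ℝ)+1)^4 ≤ ε^2 * ((k:ℝ)^4 * (Real.log 2)^4) := by
        rw [hδ_def]
        have expand : 4 * (ε * Real.log 2 ^ 2 / 9)^2 = (4/81) * ε^2 * (Real.log 2)^4 := by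
          ring
        rw [expand]
        have hwt : (0:ℝ) ≤ (4/81)*ε^2*(Real.log 2)^4 := by positivity
        nlinarith [mul_le_mul_of_nonneg_left hk4 hwt,
          (by positivity : (0:ℝ) ≤ ε^2 * Real.log 2 ^ 4 * (k:ℝ)^4)]
      nlinarith [mul_le_mul_of_nonneg_left hd hss]
    have e6 : ε^2 * (s^2 * ((k:ℝ)^4 * (Real.log 2)^4)) ≤ ε^2 * (s^2 * L^4) := by
      have h0 : (0:ℝ) ≤ ε^2 * s^2 := by positivity
      nlinarith [mul_le_mul_of_nonneg_left hL4 h0]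
    have e7 : ε^2 * (s^2 * L^4) = (ε*(s*L^2))^2 := by ring
    linarith
  -- conclude
  have hrhs : 0 < ε*(s*L^2) := by positivity
  have habs : |A+B| < ε*(s*L^2) := by
    calc |A+B| = Real.sqrt ((A+B)^2) := (Real.sqrt_sq_eq_abs _).symm
      _ < Real.sqrt ((ε*(s*L^2))^2) := Real.sqrt_lt_sqrt (sq_nonneg _) hsq
      _ = ε*(s*L^2) := Real.sqrt_sq hrhs.le
  rw [hT]
  have hden : 0 < s * L^2 := by positivity
  rw [Real.norm_eq_abs, abs_mul, abs_of_pos (by positivity : (0:ℝ) < 1/(s*L^2))]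
  rw [one_div, inv_mul_eq_div, div_lt_iff₀ hden]
  calc |A+B| < ε*(s*L^2) := habs
    _ = ε * (s * L^2) := by ring
end

section
/- Let α be a symmetric Borel probability measure on ℝ (invariant under x ↦ −x) with infinite support and all moments finite, so that its monic orthogonal polynomials satisfy x p̃_n = p̃_{n+1} + a_n² p̃_{n−1} with all b_n = 0. Then all odd moments of α vanish, m_2(α) = a_1², m_4(α) = a_1²(a_1² + a_2²), and for k ≥ 3: m_{2k}(α) = (Σ_{j=1}^{2k−2} a_j²) m_{2k−2}(α) − Σ_{j=2}^{k−1} η_{2k−1,2k−1−2j} m_{2k−2j}(α), where η_{n,k} is the coefficient of x^k in p̃_n. -/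
open MeasureTheory

lemma sum_even_zero (f : ℕ → ℝ) (h : ∀ j, f (2 * j) = 0) (k : ℕ) :
    ∑ i ∈ Finset.range (2 * k), f i = ∑ j ∈ Finset.range k, f (2 * j + 1) := by
  induction k with
  | zero => simp
  | succ n ih =>
    rw [show 2 * (n + 1) = 2 * n + 1 + 1 from by ring, Finset.sum_range_succ,
      Finset.sum_range_succ, ih, Finset.sum_range_succ, h n]
    ring

theorem stmt_15 (α : Measure ℝ) [IsProbabilityMeasure α]
    (hsupp : (measSupport α).Infinite)
    (hint : ∀ k, Integrable (fun x : ℝ => x ^ k) α)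
    (hsym : Measure.map (fun x : ℝ => -x) α = α)
    (p : ℕ → Polynomial ℝ)
    (hmonic : ∀ k, (p k).Monic)
    (hdeg : ∀ k, (p k).natDegree = k)
    (horth : ∀ j k, j ≠ k → ∫ x, (p j).eval x * (p k).eval x ∂α = 0)
    (a : ℕ → ℝ) (ha : ∀ k, 1 ≤ k → 0 < a k)
    (h0 : p 0 = 1)
    (hrec0 : Polynomial.X * p 0 = p 1)
    (hrec : ∀ k, 1 ≤ k → Polynomial.X * p k =
      p (k + 1) + Polynomial.C (a k ^ 2) * p (k - 1)) :
    (∀ k : ℕ, mom α (2 * k + 1) = 0) ∧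
    mom α 2 = a 1 ^ 2 ∧
    mom α 4 = a 1 ^ 2 * (a 1 ^ 2 + a 2 ^ 2) ∧
    (∀ k : ℕ, 3 ≤ k →
      mom α (2 * k) =
        (∑ j ∈ Finset.Icc 1 (2 * k - 2), a j ^ 2) * mom α (2 * k - 2) -
          ∑ j ∈ Finset.Icc 2 (k - 1),
            (p (2 * k - 1)).coeff (2 * k - 1 - 2 * j) * mom α (2 * k - 2 * j)) := by
  -- basic polynomials
  have hp1 : p 1 = Polynomial.X := by rw [← hrec0, h0, mul_one]
  have hp2 : p 2 = Polynomial.X ^ 2 - Polynomial.C (a 1 ^ 2) := by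
    have h := hrec 1 le_rfl
    rw [hp1] at h
    simp only [h0, mul_one] at h
    linear_combination -h
  have hp3 : p 3 = Polynomial.X ^ 3 - Polynomial.C (a 1 ^ 2 + a 2 ^ 2) * Polynomial.X := by
    have h := hrec 2 (by norm_num)
    rw [hp2] at h
    simp only [show (2 : ℕ) - 1 = 1 from rfl, hp1] at h
    rw [show Polynomial.C (a 1 ^ 2 + a 2 ^ 2) = Polynomial.C (a 1 ^ 2) + Polynomial.C (a 2 ^ 2)
      from map_add _ _ _]
    linear_combination -h
  -- odd moments vanish
  have hmom_odd : ∀ k : ℕ, mom α (2 * k + 1) = 0 := by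
    intro k
    have hodd : Odd (2 * k + 1) := ⟨k, by ring⟩
    have h1 : mom α (2 * k + 1) = ∫ x, (-x) ^ (2 * k + 1) ∂α := by
      unfold mom
      conv_lhs => rw [← hsym]
      rw [integral_map measurable_neg.aemeasurable]
      exact (Continuous.aestronglyMeasurable (by continuity))
    have h2 : (∫ x, (-x) ^ (2 * k + 1) ∂α) = - mom α (2 * k + 1) := by
      simp_rw [hodd.neg_pow]
      exact integral_neg _
    rw [h2] at h1
    linarith
  -- integral of a polynomial times x
  have hintq : ∀ (q : Polynomial ℝ) (n : ℕ), q.natDegree < n →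
      ∫ x, x * q.eval x ∂α = ∑ i ∈ Finset.range n, q.coeff i * mom α (i + 1) := by
    intro q n hn
    have he : ∀ x : ℝ, x * q.eval x = ∑ i ∈ Finset.range n, q.coeff i * x ^ (i + 1) := by
      intro x
      rw [Polynomial.eval_eq_sum_range' hn, Finset.mul_sum]
      exact Finset.sum_congr rfl fun i _ => by ring
    simp_rw [he]
    rw [integral_finset_sum _ (fun i _ => (hint (i + 1)).const_mul _)]
    exact Finset.sum_congr rfl fun i _ => integral_const_mul _ _
  -- m_2
  have hm2 : mom α 2 = a 1 ^ 2 := by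
    have h := horth 0 2 (by norm_num)
    simp only [h0, hp2, Polynomial.eval_one, one_mul, Polynomial.eval_sub, Polynomial.eval_pow,
      Polynomial.eval_X, Polynomial.eval_C] at h
    rw [integral_sub (hint 2) (integrable_const _), integral_const] at h
    simp only [measure_univ, probReal_univ, ENNReal.toReal_one, smul_eq_mul, one_mul] at h
    have : mom α 2 = ∫ x, x ^ 2 ∂α := rfl
    linarith
  -- m_4
  have hm4 : mom α 4 = a 1 ^ 2 * (a 1 ^ 2 + a 2 ^ 2) := by
    have h := horth 1 3 (by norm_num)
    simp only [hp1, hp3, Polynomial.eval_sub, Polynomial.eval_pow, Polynomial.eval_X,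
      Polynomial.eval_mul, Polynomial.eval_C] at h
    have he : ∀ x : ℝ, x * (x ^ 3 - (a 1 ^ 2 + a 2 ^ 2) * x) =
        x ^ 4 - (a 1 ^ 2 + a 2 ^ 2) * x ^ 2 := fun x => by ring
    simp_rw [he] at h
    rw [integral_sub (hint 4) ((hint 2).const_mul _), integral_const_mul] at h
    have h4 : mom α 4 = ∫ x, x ^ 4 ∂α := rfl
    have h2 : mom α 2 = ∫ x, x ^ 2 ∂α := rfl
    rw [← h4, ← h2, hm2] at h
    linarith
  -- parity of coefficients
  have hpar : ∀ n i, (n + i) % 2 = 1 → (p n).coeff i = 0 := by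
    have key : ∀ n, (∀ i, (n + i) % 2 = 1 → (p n).coeff i = 0) ∧
        (∀ i, (n + 1 + i) % 2 = 1 → (p (n + 1)).coeff i = 0) := by
      intro n
      induction n with
      | zero =>
        constructor
        · intro i hi
          rw [h0, Polynomial.coeff_one, if_neg (by omega)]
        · intro i hi
          rw [hp1, Polynomial.coeff_X, if_neg (by omega)]
      | succ m ih =>
        refine ⟨ih.2, fun i hi => ?_⟩
        have hr := hrec (m + 1) (by omega)
        have hpm2 : p (m + 2) = Polynomial.X * p (m + 1) -
            Polynomial.C (a (m + 1) ^ 2) * p m := by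
          simp only [show m + 1 - 1 = m from rfl] at hr
          linear_combination -hr
        rw [hpm2, Polynomial.coeff_sub, Polynomial.coeff_C_mul]
        cases i with
        | zero =>
          rw [Polynomial.mul_coeff_zero, Polynomial.coeff_X_zero, zero_mul,
            ih.1 0 (by omega), mul_zero, sub_zero]
        | succ j =>
          rw [Polynomial.coeff_X_mul, ih.2 j (by omega), ih.1 (j + 1) (by omega), mul_zero,
            sub_zero]
    exact fun n => (key n).1
  -- subleading coefficient
  have hsub : ∀ n : ℕ, (p (n + 2)).coeff n = -∑ j ∈ Finset.Icc 1 (n + 1), a j ^ 2 := by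
    intro n
    induction n with
    | zero =>
      rw [hp2, Polynomial.coeff_sub, Polynomial.coeff_X_pow, Polynomial.coeff_C]
      simp
    | succ m ih =>
      have hr := hrec (m + 2) (by omega)
      have hc := congrArg (fun q => Polynomial.coeff q (m + 1)) hr
      simp only [show m + 2 - 1 = m + 1 from rfl, Polynomial.coeff_add,
        Polynomial.coeff_X_mul, Polynomial.coeff_C_mul] at hc
      have hlead : (p (m + 1)).coeff (m + 1) = 1 := by
        have := (hmonic (m + 1)).coeff_natDegree
        rwa [hdeg (m + 1)] at this
      rw [ih, hlead, mul_one] at hc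
      have e : m + 1 + 2 = m + 2 + 1 := by omega
      rw [e, Finset.sum_Icc_succ_top (by omega)]
      linarith
  refine ⟨hmom_odd, hm2, hm4, fun k hk => ?_⟩
  -- general recursion, k ≥ 3
  have hne : (1 : ℕ) ≠ 2 * k - 1 := by omega
  have h := horth 1 (2 * k - 1) hne
  rw [hp1] at h
  simp only [Polynomial.eval_X] at h
  rw [hintq (p (2 * k - 1)) (2 * k) (by rw [hdeg]; omega)] at h
  -- drop even-index terms
  set P := p (2 * k - 1) with hP
  have heven : ∀ j, P.coeff (2 * j) * mom α (2 * j + 1) = 0 := by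
    intro j
    rw [hpar (2 * k - 1) (2 * j) (by omega), zero_mul]
  rw [sum_even_zero (fun i => P.coeff i * mom α (i + 1)) heven k] at h
  -- reflect the sum
  rw [← Finset.sum_range_reflect (fun j => P.coeff (2 * j + 1) * mom α (2 * j + 1 + 1)) k] at h
  have hre : ∀ j ∈ Finset.range k,
      P.coeff (2 * (k - 1 - j) + 1) * mom α (2 * (k - 1 - j) + 1 + 1) =
      P.coeff (2 * k - 1 - 2 * j) * mom α (2 * k - 2 * j) := by
    intro j hj
    have hjk := Finset.mem_range.mp hj
    have e1 : 2 * (k - 1 - j) + 1 = 2 * k - 1 - 2 * j := by omega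
    have e2 : 2 * (k - 1 - j) + 1 + 1 = 2 * k - 2 * j := by omega
    rw [e2, e1]
  rw [Finset.sum_congr rfl hre] at h
  -- split off j = 0 and j = 1
  have hsplit : Finset.range k = insert 0 (insert 1 (Finset.Icc 2 (k - 1))) := by
    ext x
    simp only [Finset.mem_range, Finset.mem_insert, Finset.mem_Icc]
    omega
  rw [hsplit, Finset.sum_insert (by simp), Finset.sum_insert (by simp)] at h
  have h00 : P.coeff (2 * k - 1 - 2 * 0) * mom α (2 * k - 2 * 0) = mom α (2 * k) := by
    have hlead : P.coeff (2 * k - 1) = 1 := by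
      have := (hmonic (2 * k - 1)).coeff_natDegree
      rwa [hdeg (2 * k - 1)] at this
    rw [show 2 * k - 1 - 2 * 0 = 2 * k - 1 from by omega, show 2 * k - 2 * 0 = 2 * k from by omega,
      hlead, one_mul]
  have h11 : P.coeff (2 * k - 1 - 2 * 1) * mom α (2 * k - 2 * 1) =
      (-∑ j ∈ Finset.Icc 1 (2 * k - 2), a j ^ 2) * mom α (2 * k - 2) := by
    have hs := hsub (2 * k - 3)
    rw [show 2 * k - 3 + 2 = 2 * k - 1 from by omega, show 2 * k - 3 + 1 = 2 * k - 2 from by omega]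
      at hs
    rw [show 2 * k - 1 - 2 * 1 = 2 * k - 3 from by omega,
      show 2 * k - 2 * 1 = 2 * k - 2 from by omega, ← hP] at *
    rw [hs]
  rw [h00, h11] at h
  linarith
end
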